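/- arXiv:1904.04771 — 6 statements merged into one kernel-verified Lean document; each statement's English description precedes it below -/
import Mathlib

section
/- Let a, b > 0 and 0 < d < g, and let B > 0. Define the matrices Q = [[-a, a], [b, -b]] and R = diag(-d, g-d), and set Δ = (ag - ad - bd)/(a+b), with Δ ≠ 0. Suppose F = (F₁, F₂) : [0, B] → ℝ² is differentiable and satisfies the ODE F'(x) = R⁻¹ Qᵀ F(x) for all x ∈ [0, B], together with the boundary conditions F₂(0) = 0 and F₁(B) = b/(a+b). Then F₁(0) + F₂(0) = F₁(0) = (-Δ/d) / (1 - (a(g-d)/(bd)) · exp((a+b)Δ B / ((g-d)d))). -/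
open scoped Matrix

/-- Two-state Markov modulated fluid queue: closed-form LOLP.
State `0` is the discharge state (rate `-d`, transition rate `a` out of it),
state `1` is the charge state (rate `g - d`, transition rate `b` out of it).
`F x i` is the stationary probability that the battery content is at most `x`
and the background chain is in state `i`.  The LOLP is `F 0 0 + F 0 1`. -/
theorem two_state_LOLP_closed_form
    (a b d g B : ℝ) (ha : 0 < a) (hb : 0 < b) (hd : 0 < d) (hdg : d < g)
    (hB : 0 < B)
    (Q R : Matrix (Fin 2) (Fin 2) ℝ)
    (hQ : Q = !![-a, a; b, -b])
    (hR : R = !![-d, 0; 0, g - d])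
    (Δ : ℝ) (hΔdef : Δ = (a * g - a * d - b * d) / (a + b)) (hΔ : Δ ≠ 0)
    (F : ℝ → Fin 2 → ℝ)
    (hODE : ∀ x ∈ Set.Icc (0 : ℝ) B, HasDerivAt F ((R⁻¹ * Qᵀ) *ᵥ F x) x)
    (hbc0 : F 0 1 = 0) (hbcB : F B 0 = b / (a + b)) :
    F 0 0 + F 0 1 = F 0 0 ∧
      F 0 0 = (-Δ / d) /
        (1 - (a * (g - d) / (b * d)) *
          Real.exp ((a + b) * Δ * B / ((g - d) * d))) := by
  have hd0 : d ≠ 0 := hd.ne'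
  have hgd : (0:ℝ) < g - d := sub_pos.2 hdg
  have hgd0 : g - d ≠ 0 := hgd.ne'
  have hab : (0:ℝ) < a + b := add_pos ha hb
  have hab0 : a + b ≠ 0 := hab.ne'
  -- compute the matrix
  have hRinv : R⁻¹ = !![-d⁻¹, 0; 0, (g-d)⁻¹] := by
    apply Matrix.inv_eq_right_inv
    subst hR
    ext i j
    fin_cases i <;> fin_cases j <;>
      simp [Matrix.mul_apply, Fin.sum_univ_two] <;> field_simp
  have hQT : Qᵀ = !![-a, b; a, -b] := by
    subst hQ
    ext i j
    fin_cases i <;> fin_cases j <;> simp [Matrix.transpose_apply]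
  have hM : R⁻¹ * Qᵀ = !![d⁻¹*a, -(d⁻¹*b); (g-d)⁻¹*a, -((g-d)⁻¹*b)] := by
    rw [hRinv, hQT]
    ext i j
    fin_cases i <;> fin_cases j <;>
      simp [Matrix.mul_apply, Fin.sum_univ_two]
  -- scalar ODEs for the components
  have hD0 : ∀ x ∈ Set.Icc (0:ℝ) B,
      HasDerivAt (fun y => F y 0) (d⁻¹*a * F x 0 - d⁻¹*b * F x 1) x := by
    intro x hx
    have h := hasDerivAt_pi.1 (hODE x hx) 0
    rw [hM] at h
    refine h.congr_deriv ?_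
    simp [Matrix.mulVec, dotProduct, Fin.sum_univ_two]
    ring
  have hD1 : ∀ x ∈ Set.Icc (0:ℝ) B,
      HasDerivAt (fun y => F y 1) ((g-d)⁻¹*a * F x 0 - (g-d)⁻¹*b * F x 1) x := by
    intro x hx
    have h := hasDerivAt_pi.1 (hODE x hx) 1
    rw [hM] at h
    refine h.congr_deriv ?_
    simp [Matrix.mulVec, dotProduct, Fin.sum_univ_two]
    ring
  set lam : ℝ := (a + b) * Δ / ((g - d) * d) with hlam
  have hlamkey : (a + b) * Δ = a * (g - d) - b * d := by
    rw [hΔdef]; field_simp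
  -- u := d * F 0 - (g-d) * F 1 is constant
  have hu : ∀ x ∈ Set.Icc (0:ℝ) B,
      HasDerivAt (fun y => d * F y 0 - (g-d) * F y 1) 0 x := by
    intro x hx
    have := ((hD0 x hx).const_mul d).sub ((hD1 x hx).const_mul (g-d))
    refine this.congr_deriv ?_
    field_simp
    ring
  -- w := (a * F 0 - b * F 1) * exp (-lam * x) is constant
  have hw : ∀ x ∈ Set.Icc (0:ℝ) B,
      HasDerivAt (fun y => (a * F y 0 - b * F y 1) * Real.exp (-lam * y)) 0 x := by
    intro x hx
    have h1 := ((hD0 x hx).const_mul a).sub ((hD1 x hx).const_mul b)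
    have h2 : HasDerivAt (fun y : ℝ => Real.exp (-lam * y))
        (-lam * Real.exp (-lam * x)) x := by
      have := (Real.hasDerivAt_exp (-lam * x)).comp x ((hasDerivAt_id x).const_mul (-lam))
      refine this.congr_deriv ?_
      ring
    have h3 := h1.mul h2
    refine h3.congr_deriv ?_
    have hlam2 : lam = a * d⁻¹ - b * (g-d)⁻¹ := by
      rw [hlam, hlamkey]
      field_simp
    have hex : a * (d⁻¹*a * F x 0 - d⁻¹*b * F x 1)
        - b * ((g-d)⁻¹*a * F x 0 - (g-d)⁻¹*b * F x 1)
        = lam * (a * F x 0 - b * F x 1) := by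
      rw [hlam2]; ring
    rw [hex]
    simp only [Pi.sub_apply]
    ring
  -- conclude the constancy on [0, B]
  have const_of : ∀ (φ : ℝ → ℝ), (∀ x ∈ Set.Icc (0:ℝ) B, HasDerivAt φ 0 x) →
      φ B = φ 0 := by
    intro φ hφ
    have hcont : ContinuousOn φ (Set.Icc 0 B) := fun x hx =>
      ((hφ x hx).continuousAt).continuousWithinAt
    exact constant_of_has_deriv_right_zero hcont
      (fun x hx => ((hφ x (Set.mem_Icc_of_Ico hx)).hasDerivWithinAt)) B
      (Set.right_mem_Icc.2 hB.le)
  have h0B : (0:ℝ) ∈ Set.Icc (0:ℝ) B := Set.left_mem_Icc.2 hB.le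
  have huB := const_of _ hu
  have hwB := const_of _ hw
  -- unpack the constancy equations
  set E : ℝ := Real.exp ((a + b) * Δ * B / ((g - d) * d)) with hE
  have hEpos : 0 < E := Real.exp_pos _
  have hwB' : (a * F B 0 - b * F B 1) = (a * F 0 0) * E := by
    have hEB : Real.exp (-lam * B) = E⁻¹ := by
      rw [hE, ← Real.exp_neg]
      congr 1
      rw [hlam]; ring
    rw [hEB] at hwB
    simp [hbc0] at hwB
    field_simp at hwB ⊢
    linarith [hwB]
  have huB' : d * F B 0 - (g-d) * F B 1 = d * F 0 0 := by
    simpa [hbc0] using huB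
  -- eliminate F B 1
  have key : F 0 0 * (b * d - a * (g-d) * E) = -(b * Δ) := by
    have e1 : b * (d * F B 0 - (g-d) * F B 1) = b * (d * F 0 0) := by rw [huB']
    have e2 : (g-d) * (a * F B 0 - b * F B 1) = (g-d) * ((a * F 0 0) * E) := by
      rw [hwB']
    have e3 : b * d * F B 0 - (g-d) * a * F B 0
        = b * d * F 0 0 - (g-d) * a * F 0 0 * E := by linarith
    rw [hbcB] at e3
    have e4 : (b * d - (g-d) * a) * (b / (a+b)) = -(b * Δ) := by
      have : b * d - (g - d) * a = -((a+b) * Δ) := by linarith [hlamkey]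
      rw [this]
      field_simp
    nlinarith [e3, e4]
  have hden : b * d - a * (g-d) * E ≠ 0 := by
    intro h
    rw [h, mul_zero] at key
    exact (mul_ne_zero hb.ne' hΔ) (by linarith)
  refine ⟨by rw [hbc0]; ring, ?_⟩
  have hbd : b * d ≠ 0 := mul_ne_zero hb.ne' hd0
  have hden2 : 1 - a * (g - d) / (b * d) * E ≠ 0 := by
    intro h
    apply hden
    field_simp at h
    linarith
  rw [eq_div_iff hden2]
  field_simp
  linear_combination key
end

section
/- Fix B > 0 and a continuous function r : [0,∞) → ℝ satisfying r(s) ≥ r̲ for all s, where r̲ < 0. Let b : [0,∞) → [0,B] be a regulated battery trajectory driven by r, and suppose (1/t)∫₀ᵗ r(s) ds → Δ as t → ∞ with Δ < 0. Then liminf_{t→∞} (1/t)·Leb({s ∈ [0,t] : b(s) = 0 and r(s) < 0}) ≥ (-Δ)/(-r̲), where Leb denotes Lebesgue measure. That is, the long-run fraction of time during which load is lost is at least (-Δ)/(-r̲). -/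
open MeasureTheory intervalIntegral

/-- Negative drift LOLP lower bound (pathwise form): if `r ≥ r̲` with
`r̲ < 0` and the time-average net generation tends to `Δ < 0`, then the
long-run fraction of time during which load is lost is at least
`(-Δ)/(-r̲)`. -/
theorem battery_LOLP_lower_bound
    (B : ℝ) (hB : 0 < B) (r b : ℝ → ℝ) (hr : Continuous r)
    (rlo : ℝ) (hrlo : rlo < 0) (hrge : ∀ s, rlo ≤ r s)
    (hrange : ∀ t ≥ (0 : ℝ), b t ∈ Set.Icc (0 : ℝ) B)
    (hdiff : Differentiable ℝ b)
    (hderiv0 : ∀ t ≥ (0 : ℝ),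
      ((b t = 0 ∧ r t < 0) ∨ (b t = B ∧ 0 < r t)) → deriv b t = 0)
    (hderivr : ∀ t ≥ (0 : ℝ),
      ¬((b t = 0 ∧ r t < 0) ∨ (b t = B ∧ 0 < r t)) → deriv b t = r t)
    (Δ : ℝ) (hΔ : Δ < 0)
    (hdrift : Filter.Tendsto (fun t => (∫ s in (0:ℝ)..t, r s) / t)
      Filter.atTop (nhds Δ)) :
    (-Δ) / (-rlo) ≤
      Filter.liminf
        (fun t => (volume {s : ℝ | s ∈ Set.Icc 0 t ∧ b s = 0 ∧ r s < 0}).toReal / t)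
        Filter.atTop := by
  classical
  set Z : Set ℝ := {s | b s = 0 ∧ r s < 0} with hZdef
  have hbc : Continuous b := hdiff.continuous
  have hZm : MeasurableSet Z := by
    have h1 : MeasurableSet {s : ℝ | b s = 0} :=
      hbc.measurable (measurableSet_singleton (0:ℝ))
    have h2 : MeasurableSet {s : ℝ | r s < 0} :=
      hr.measurable measurableSet_Iio
    exact h1.inter h2
  -- notation for the loss fraction numerator
  set L : ℝ → ℝ := fun t => (volume {s : ℝ | s ∈ Set.Icc 0 t ∧ b s = 0 ∧ r s < 0}).toReal
    with hLdef
  -- measure over Icc equals measure over Ioc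
  have hLIoc : ∀ t : ℝ, 0 ≤ t → L t = (volume (Z ∩ Set.Ioc 0 t)).toReal := by
    intro t ht
    have hset : {s : ℝ | s ∈ Set.Icc 0 t ∧ b s = 0 ∧ r s < 0} = Z ∩ Set.Icc 0 t := by
      ext s
      simp only [hZdef, Set.mem_setOf_eq, Set.mem_inter_iff]
      tauto
    have hmeq : volume (Z ∩ Set.Icc 0 t) = volume (Z ∩ Set.Ioc 0 t) := by
      apply le_antisymm
      · have hsub : Z ∩ Set.Icc 0 t ⊆ (Z ∩ Set.Ioc 0 t) ∪ {0} := by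
          intro s hs
          rcases hs with ⟨hsZ, hs0, hst⟩
          rcases eq_or_lt_of_le hs0 with h | h
          · exact Or.inr (by simp [← h])
          · exact Or.inl ⟨hsZ, h, hst⟩
        calc volume (Z ∩ Set.Icc 0 t) ≤ volume ((Z ∩ Set.Ioc 0 t) ∪ {0}) :=
              measure_mono hsub
          _ ≤ volume (Z ∩ Set.Ioc 0 t) + volume ({0} : Set ℝ) := measure_union_le _ _
          _ = volume (Z ∩ Set.Ioc 0 t) := by simp
      · exact measure_mono (Set.inter_subset_inter_right _ Set.Ioc_subset_Icc_self)
    rw [hLdef]; simp only [hset, hmeq]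
  -- key integral inequality
  have key : ∀ t : ℝ, 0 ≤ t → rlo * L t ≤ (∫ s in (0:ℝ)..t, r s) + B := by
    intro t ht
    have hint_r : IntervalIntegrable r volume 0 t := hr.intervalIntegrable 0 t
    have hmdb : Measurable (deriv b) := measurable_deriv b
    -- deriv b is interval integrable
    have hint_db : IntervalIntegrable (deriv b) volume 0 t := by
      rw [intervalIntegrable_iff_integrableOn_Ioc_of_le ht]
      apply Integrable.mono' (hr.norm.integrableOn_Ioc) hmdb.aestronglyMeasurable.restrict
      filter_upwards [ae_restrict_mem measurableSet_Ioc] with s hs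
      have hs0 : (0:ℝ) ≤ s := le_of_lt hs.1
      by_cases hcase : (b s = 0 ∧ r s < 0) ∨ (b s = B ∧ 0 < r s)
      · rw [hderiv0 s hs0 hcase, norm_zero]; exact norm_nonneg _
      · rw [hderivr s hs0 hcase]
    have hftc : ∫ s in (0:ℝ)..t, deriv b s = b t - b 0 :=
      integral_deriv_eq_sub (fun x _ => hdiff x) hint_db
    -- the indicator function
    set g : ℝ → ℝ := Z.indicator (fun _ => rlo) with hgdef
    have hint_g : IntervalIntegrable g volume 0 t := by
      rw [intervalIntegrable_iff_integrableOn_Ioc_of_le ht]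
      have hco : IntegrableOn (fun _ : ℝ => |rlo|) (Set.Ioc 0 t) volume :=
        integrableOn_const measure_Ioc_lt_top.ne
      apply Integrable.mono' hco
        ((measurable_const.indicator hZm).aestronglyMeasurable.restrict)
      filter_upwards with s
      by_cases hsZ : s ∈ Z
      · rw [Set.indicator_of_mem hsZ, Real.norm_eq_abs]
      · rw [Set.indicator_of_notMem hsZ, norm_zero]
        exact abs_nonneg _
    -- pointwise inequality on Icc 0 t
    have hpt : ∀ s ∈ Set.Icc (0:ℝ) t, g s ≤ r s - deriv b s := by
      intro s hs
      have hs0 : (0:ℝ) ≤ s := hs.1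
      by_cases h1 : b s = 0 ∧ r s < 0
      · have : deriv b s = 0 := hderiv0 s hs0 (Or.inl h1)
        have hsZ : s ∈ Z := h1
        simp [hgdef, hsZ, this, hrge s]
      · have hsZ : s ∉ Z := h1
        by_cases h2 : b s = B ∧ 0 < r s
        · have : deriv b s = 0 := hderiv0 s hs0 (Or.inr h2)
          simp [hgdef, hsZ, this, le_of_lt h2.2]
        · have : deriv b s = r s := hderivr s hs0 (by tauto)
          simp [hgdef, hsZ, this]
    have hmono : ∫ s in (0:ℝ)..t, g s ≤ ∫ s in (0:ℝ)..t, (r s - deriv b s) :=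
      integral_mono_on ht hint_g (hint_r.sub hint_db) hpt
    have hgval : ∫ s in (0:ℝ)..t, g s = rlo * (volume (Z ∩ Set.Ioc 0 t)).toReal := by
      rw [integral_of_le ht, hgdef, setIntegral_indicator hZm, setIntegral_const,
        Set.inter_comm, smul_eq_mul, mul_comm, measureReal_def]
    have hsub : ∫ s in (0:ℝ)..t, (r s - deriv b s)
        = (∫ s in (0:ℝ)..t, r s) - (b t - b 0) := by
      rw [integral_sub hint_r hint_db, hftc]
    have hb0 : b 0 ≤ B := (hrange 0 le_rfl).2
    have hbt : 0 ≤ b t := (hrange t ht).1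
    rw [hLIoc t ht]
    have := hmono
    rw [hgval, hsub] at this
    linarith
  -- the comparison function
  set G : ℝ → ℝ := fun t => ((∫ s in (0:ℝ)..t, r s) / t + B / t) / rlo with hGdef
  have hGtend : Filter.Tendsto G Filter.atTop (nhds ((-Δ) / (-rlo))) := by
    have h1 : Filter.Tendsto (fun t : ℝ => B / t) Filter.atTop (nhds 0) :=
      Filter.Tendsto.div_atTop tendsto_const_nhds Filter.tendsto_id
    have h2 := (hdrift.add h1).div_const rlo
    simpa [hGdef, neg_div_neg_eq] using h2
  -- eventually G ≤ L/t
  have hev : ∀ᶠ t in Filter.atTop, G t ≤ L t / t := by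
    filter_upwards [Filter.eventually_gt_atTop 0] with t ht
    have hkey := key t (le_of_lt ht)
    have h1 : (rlo * L t) / t ≤ ((∫ s in (0:ℝ)..t, r s) + B) / t :=
      div_le_div_of_nonneg_right hkey ht.le
    have h2 : rlo * (L t / t) ≤ (∫ s in (0:ℝ)..t, r s) / t + B / t := by
      rw [mul_div_assoc] at h1
      rw [← add_div]
      exact h1
    rw [hGdef]
    exact (div_le_iff_of_neg hrlo).mpr (by linarith [h2])
  -- bounded-above: L t / t ≤ 1 for t ≥ 1
  have hbd : ∀ᶠ t in Filter.atTop, L t / t ≤ 1 := by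
    filter_upwards [Filter.eventually_ge_atTop 1] with t ht
    have ht0 : (0:ℝ) < t := lt_of_lt_of_le one_pos ht
    have hL1 : L t ≤ t := by
      rw [hLIoc t (le_of_lt ht0)]
      have : volume (Z ∩ Set.Ioc 0 t) ≤ volume (Set.Ioc (0:ℝ) t) :=
        measure_mono Set.inter_subset_right
      have h2 : (volume (Z ∩ Set.Ioc 0 t)).toReal ≤ (volume (Set.Ioc (0:ℝ) t)).toReal :=
        ENNReal.toReal_mono (by simp) this
      simpa [Real.volume_Ioc, le_of_lt ht0] using h2
    rw [div_le_one ht0]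
    exact hL1
  have hliminf : Filter.liminf G Filter.atTop ≤
      Filter.liminf (fun t => L t / t) Filter.atTop := by
    exact Filter.liminf_le_liminf hev hGtend.isBoundedUnder_ge
      (Filter.isCoboundedUnder_ge_of_eventually_le _ hbd)
  calc (-Δ) / (-rlo) = Filter.liminf G Filter.atTop := (hGtend.liminf_eq).symm
    _ ≤ _ := hliminf
end

section
/- Consider the Markov-modulated setup with n ≥ 1, row-stochastic matrix P, initial probability vector π₀, rates r : {1,…,n} → ℝ, and q > 0, with (Z_k) and (Y_k) as specified. Let θ ∈ ℝ satisfy q + θ·r(l) > 0 for every state l. Then for every k ≥ 1, E[exp(θ · Σ_{j=0}^{k-1} (-r(Z_j)) Y_j)] = Σ_{l,m} π₀(l) · (M(θ)^k)_{l,m}, i.e., the moment generating function of U_k equals π₀ᵀ M(θ)^k 𝟙, where 𝟙 is the all-ones vector. -/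
open MeasureTheory ProbabilityTheory
open scoped ENNReal NNReal



lemma lintegral_exp_expMeasure {q c : ℝ} (hq : 0 < q) (hc : c < q) :
    ∫⁻ x, ENNReal.ofReal (Real.exp (c * x)) ∂expMeasure q = ENNReal.ofReal (q / (q - c)) := by
  have hqc : 0 < q - c := by linarith
  have hf : Measurable (exponentialPDF q) := (measurable_exponentialPDFReal q).ennreal_ofReal
  have hg : Measurable (fun x => ENNReal.ofReal (Real.exp (c * x))) :=
    ((Real.measurable_exp.comp (measurable_const_mul c))).ennreal_ofReal
  have hmeq : expMeasure q = MeasureTheory.volume.withDensity (exponentialPDF q) := rfl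
  rw [hmeq, lintegral_withDensity_eq_lintegral_mul _ hf hg]
  have key : ∀ x, (exponentialPDF q x) * ENNReal.ofReal (Real.exp (c * x))
      = ENNReal.ofReal (q / (q - c)) * exponentialPDF (q - c) x := by
    intro x
    rcases le_or_gt 0 x with hx | hx
    · rw [exponentialPDF_of_nonneg hx, exponentialPDF_of_nonneg hx,
        ← ENNReal.ofReal_mul (by positivity), ← ENNReal.ofReal_mul (by positivity)]
      congr 1
      rw [mul_assoc, ← Real.exp_add]
      have h1 : q / (q - c) * ((q - c) * Real.exp (-((q - c) * x))) =
          q * Real.exp (-((q - c) * x)) := by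
        field_simp
      rw [h1]
      congr 1
      ring
    · rw [exponentialPDF_of_neg hx, exponentialPDF_of_neg hx, zero_mul, mul_zero]
  simp only [Pi.mul_apply, key]
  have hf2 : Measurable (exponentialPDF (q - c)) :=
    (measurable_exponentialPDFReal (q - c)).ennreal_ofReal
  rw [lintegral_const_mul _ hf2, lintegral_exponentialPDF_eq_one hqc, mul_one]


lemma lintegral_pi_prod_aux : ∀ (k : ℕ) (ν : Fin k → Measure ℝ), (∀ i, SigmaFinite (ν i)) →
    ∀ (f : Fin k → ℝ → ℝ≥0∞), (∀ i, Measurable (f i)) →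
    ∫⁻ x, (∏ i, f i (x i)) ∂Measure.pi ν = ∏ i, ∫⁻ x, f i x ∂ν i := by
  intro k
  induction k with
  | zero =>
    intro ν _ f _
    simp only [Finset.univ_eq_empty, Finset.prod_empty, lintegral_one]
    haveI : ∀ i, SigmaFinite (ν i) := ‹_›
    rw [Measure.pi_univ]
    simp
  | succ k ih =>
    intro ν hσ f hf
    haveI : ∀ i, SigmaFinite (ν i) := hσ
    have hmp := measurePreserving_piFinSuccAbove ν 0
    set e := MeasurableEquiv.piFinSuccAbove (fun _ : Fin (k+1) => ℝ) 0
    have hg : Measurable (fun p : ℝ × (Fin k → ℝ) => f 0 p.1 * ∏ j : Fin k, f j.succ (p.2 j)) := by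
      apply Measurable.mul
      · exact (hf 0).comp measurable_fst
      · exact Finset.measurable_prod _ fun j _ =>
          (hf j.succ).comp ((measurable_pi_apply j).comp measurable_snd)
    have hcomp : ∀ x : Fin (k+1) → ℝ,
        (fun p : ℝ × (Fin k → ℝ) => f 0 p.1 * ∏ j : Fin k, f j.succ (p.2 j)) (e x)
          = ∏ i, f i (x i) := by
      intro x
      have : e x = (x 0, fun j : Fin k => x ((0 : Fin (k+1)).succAbove j)) := rfl
      rw [this, Fin.prod_univ_succ]
      simp [Fin.zero_succAbove]
    calc ∫⁻ x, (∏ i, f i (x i)) ∂Measure.pi ν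
        = ∫⁻ x, (fun p : ℝ × (Fin k → ℝ) => f 0 p.1 * ∏ j : Fin k, f j.succ (p.2 j)) (e x)
            ∂Measure.pi ν := by simp_rw [hcomp]
      _ = ∫⁻ p, f 0 p.1 * (∏ j : Fin k, f j.succ (p.2 j))
            ∂((ν 0).prod (Measure.pi fun j => ν ((0 : Fin (k+1)).succAbove j))) :=
          hmp.lintegral_comp hg
      _ = (∫⁻ x, f 0 x ∂ν 0) * ∫⁻ y, (∏ j : Fin k, f j.succ (y j))
            ∂(Measure.pi fun j => ν ((0 : Fin (k+1)).succAbove j)) := by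
          exact lintegral_prod_mul (f := fun a => f 0 a)
            (g := fun y : Fin k → ℝ => ∏ j : Fin k, f j.succ (y j)) ((hf 0).aemeasurable)
            ((Finset.measurable_prod _ fun j _ => (hf j.succ).comp (measurable_pi_apply j)).aemeasurable)
      _ = ∏ i, ∫⁻ x, f i x ∂ν i := by
          have := ih (fun j => ν ((0 : Fin (k+1)).succAbove j)) (fun j => hσ _)
            (fun j => f j.succ) (fun j => hf j.succ)
          rw [this, Fin.prod_univ_succ]
          simp [Fin.zero_succAbove]


lemma alg_path_sum (n : ℕ) (P : Matrix (Fin n) (Fin n) ℝ) (hProw : ∀ l, ∑ m, P l m = 1)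
    (d : Fin n → ℝ) (M : Matrix (Fin n) (Fin n) ℝ) (hM : ∀ l m, M l m = P l m * d l) :
    ∀ (m : ℕ) (v : Fin n → ℝ),
      ∑ i : Fin (m+1) → Fin n, (v (i 0) * ∏ j : Fin m, P (i j.castSucc) (i j.succ))
        * ∏ j : Fin (m+1), d (i j)
      = ∑ l, ∑ l', v l * (M ^ (m+1)) l l' := by
  intro m
  induction m with
  | zero =>
    intro v
    rw [← (Equiv.funUnique (Fin 1) (Fin n)).symm.sum_comp]
    simp only [Finset.univ_eq_empty, Finset.prod_empty, mul_one, zero_add, pow_one,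
      Equiv.funUnique_symm_apply, Fin.prod_univ_one]
    have : ∀ l : Fin n, ∑ l', v l * M l l' = v l * d l := by
      intro l
      rw [← Finset.mul_sum]
      congr 1
      simp only [hM]
      rw [← Finset.sum_mul, hProw, one_mul]
    simp only [this]
    exact Finset.sum_congr rfl (fun x _ => by simp [Fin.prod_univ_succ])
  | succ m ih =>
    intro v
    rw [← (Fin.consEquiv (fun _ : Fin (m+2) => Fin n)).sum_comp, Fintype.sum_prod_type]
    have hterm : ∀ (l : Fin n) (i' : Fin (m+1) → Fin n),
        (v ((Fin.cons l i' : ∀ _ : Fin (m+2), Fin n) 0) * ∏ j : Fin (m+1),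
            P ((Fin.cons l i' : ∀ _ : Fin (m+2), Fin n) j.castSucc)
              ((Fin.cons l i' : ∀ _ : Fin (m+2), Fin n) j.succ))
          * ∏ j : Fin (m+2), d ((Fin.cons l i' : ∀ _ : Fin (m+2), Fin n) j)
        = ((v l * M l (i' 0)) * ∏ j : Fin m, P (i' j.castSucc) (i' j.succ))
          * ∏ j : Fin (m+1), d (i' j) := by
      intro l i'
      rw [Fin.prod_univ_succ
          (fun j : Fin (m+1) => P ((Fin.cons l i' : ∀ _ : Fin (m+2), Fin n) j.castSucc)
            ((Fin.cons l i' : ∀ _ : Fin (m+2), Fin n) j.succ)),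
        Fin.prod_univ_succ (fun j : Fin (m+2) => d ((Fin.cons l i' : ∀ _ : Fin (m+2), Fin n) j))]
      simp only [← Fin.succ_castSucc, Fin.cons_zero, Fin.cons_succ, Fin.castSucc_zero, hM]
      ring
    simp only [Fin.consEquiv_apply]
    simp only [hterm]
    have hih : ∀ l : Fin n,
        ∑ i' : Fin (m+1) → Fin n, ((v l * M l (i' 0))
            * ∏ j : Fin m, P (i' j.castSucc) (i' j.succ)) * ∏ j : Fin (m+1), d (i' j)
          = ∑ a, ∑ b, (v l * M l a) * (M ^ (m+1)) a b := fun l => ih (fun a => v l * M l a)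
    simp only [hih]
    refine Finset.sum_congr rfl fun l _ => ?_
    rw [Finset.sum_comm]
    refine Finset.sum_congr rfl fun b _ => ?_
    rw [show (M ^ (m+1+1)) = M * M ^ (m+1) from pow_succ' M (m+1), Matrix.mul_apply,
      Finset.mul_sum]
    refine Finset.sum_congr rfl fun a _ => ?_
    ring



/-- MGF of the Markov-modulated random walk `U_k = Σ_{j<k} (-r(Z_j)) Y_j`:
for `θ` with `q + θ r(l) > 0` for every state `l`,
`E[e^{θ U_k}] = π₀ᵀ M(θ)^k 𝟙` where `M(θ)_{l,m} = P_{l,m} q/(q + θ r(l))`. -/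
theorem mgf_markov_modulated_walk
    (n : ℕ) (hn : 1 ≤ n)
    (P : Matrix (Fin n) (Fin n) ℝ)
    (hPnn : ∀ l m, 0 ≤ P l m) (hProw : ∀ l, ∑ m, P l m = 1)
    (π₀ : Fin n → ℝ) (hπnn : ∀ l, 0 ≤ π₀ l) (hπsum : ∑ l, π₀ l = 1)
    (r : Fin n → ℝ) (q : ℝ) (hq : 0 < q)
    (Ω : Type*) [MeasurableSpace Ω] (μ : Measure Ω) [IsProbabilityMeasure μ]
    (Z : ℕ → Ω → Fin n) (Y : ℕ → Ω → ℝ)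
    (hZ : ∀ j, Measurable (Z j)) (hY : ∀ j, Measurable (Y j))
    (hlaw : ∀ (k : ℕ) (i : Fin (k + 1) → Fin n) (A : Fin (k + 1) → Set ℝ),
      (∀ j, MeasurableSet (A j)) →
      μ {ω | ∀ j : Fin (k + 1), Z j ω = i j ∧ Y j ω ∈ A j} =
        ENNReal.ofReal (π₀ (i 0))
          * (∏ j : Fin k, ENNReal.ofReal (P (i j.castSucc) (i j.succ)))
          * ∏ j : Fin (k + 1), expMeasure q (A j))
    (θ : ℝ) (hθ : ∀ l, 0 < q + θ * r l)
    (M : Matrix (Fin n) (Fin n) ℝ)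
    (hM : ∀ l m, M l m = P l m * (q / (q + θ * r l)))
    (k : ℕ) (hk : 1 ≤ k) :
    ∫ ω, Real.exp (θ * ∑ j ∈ Finset.range k, (-(r (Z j ω))) * Y j ω) ∂μ =
      ∑ l, ∑ m, π₀ l * (M ^ k) l m := by
  obtain ⟨m, rfl⟩ : ∃ m, k = m + 1 := ⟨k - 1, (Nat.succ_pred_eq_of_pos hk).symm⟩
  haveI hPexp : IsProbabilityMeasure (expMeasure q) := isProbabilityMeasure_expMeasure hq
  set d : Fin n → ℝ := fun l => q / (q + θ * r l) with hd
  have hdnn : ∀ l, 0 ≤ d l := fun l => div_nonneg hq.le (hθ l).le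
  set E : (Fin (m+1) → Fin n) → Set Ω := fun i => {ω | ∀ j : Fin (m+1), Z j ω = i j} with hE
  have hEmeas : ∀ i, MeasurableSet (E i) := by
    intro i
    have : E i = ⋂ j : Fin (m+1), (Z j) ⁻¹' {i j} := by
      ext ω; simp [hE, Set.mem_iInter]
    rw [this]
    exact MeasurableSet.iInter fun j => hZ j (measurableSet_singleton _)
  set w : (Fin (m+1) → Fin n) → ℝ :=
    fun i => π₀ (i 0) * ∏ j : Fin m, P (i j.castSucc) (i j.succ) with hw
  have hwnn : ∀ i, 0 ≤ w i :=
    fun i => mul_nonneg (hπnn _) (Finset.prod_nonneg fun j _ => hPnn _ _)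
  set YV : Ω → (Fin (m+1) → ℝ) := fun ω j => Y j ω with hYVdef
  have hYV : Measurable YV := measurable_pi_lambda _ fun j => hY j
  set ν : (Fin (m+1) → Fin n) → Fin (m+1) → Measure ℝ :=
    fun i => Fin.cons ((w i).toNNReal • expMeasure q) (fun _ => expMeasure q) with hν
  haveI hσ : ∀ i j, SigmaFinite (ν i j) := by
    intro i j
    induction j using Fin.cases with
    | zero => rw [hν]; simp only [Fin.cons_zero]; infer_instance
    | succ j => rw [hν]; simp only [Fin.cons_succ]; infer_instance
  have hmap : ∀ i, Measure.pi (ν i) = (μ.restrict (E i)).map YV := by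
    intro i
    refine Measure.pi_eq fun A hA => ?_
    rw [Measure.map_apply hYV (MeasurableSet.univ_pi hA),
      Measure.restrict_apply (hYV (MeasurableSet.univ_pi hA))]
    have hset : YV ⁻¹' (Set.univ.pi A) ∩ E i
        = {ω | ∀ j : Fin (m+1), Z j ω = i j ∧ Y j ω ∈ A j} := by
      ext ω
      simp only [Set.mem_inter_iff, Set.mem_preimage, Set.mem_pi, Set.mem_univ, true_implies,
        Set.mem_setOf_eq, hE, forall_and, hYVdef]
      tauto
    rw [hset, hlaw m i A hA]
    rw [Fin.prod_univ_succ (fun j : Fin (m+1) => ν i j (A j)),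
      Fin.prod_univ_succ (fun j : Fin (m+1) => expMeasure q (A j))]
    have h0 : ν i 0 (A 0) = ENNReal.ofReal (w i) * expMeasure q (A 0) := by
      rw [hν]
      simp only [Fin.cons_zero, Measure.smul_apply]
      rw [ENNReal.smul_def, smul_eq_mul, ENNReal.ofReal]
    have hs : ∀ j : Fin m, ν i j.succ (A j.succ) = expMeasure q (A j.succ) := by
      intro j; rw [hν]; simp only [Fin.cons_succ]
    simp only [h0, hs]
    rw [hw, ENNReal.ofReal_mul (hπnn _), ENNReal.ofReal_prod_of_nonneg
      (fun j _ => hPnn _ _)]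
    ring
  -- notation and basic facts
  set c : (Fin (m+1) → Fin n) → Fin (m+1) → ℝ := fun i j => -(θ * r (i j)) with hc
  have hcq : ∀ i j, c i j < q := by
    intro i j
    have := hθ (i j)
    simp only [hc]
    linarith
  have hsmul : ∀ i, ((w i).toNNReal • expMeasure q : Measure ℝ)
      = (ENNReal.ofReal (w i)) • expMeasure q := by
    intro i
    ext s hs
    simp only [Measure.smul_apply, ENNReal.smul_def, smul_eq_mul]
    rfl
  have hexpint : ∀ i (j : Fin (m+1)), ∫⁻ x, ENNReal.ofReal (Real.exp (c i j * x)) ∂expMeasure q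
      = ENNReal.ofReal (d (i j)) := by
    intro i j
    rw [lintegral_exp_expMeasure hq (hcq i j)]
    congr 1
    simp only [hc, hd]
    ring_nf
  have hpiece : ∀ i, (∫⁻ ω, ENNReal.ofReal (Real.exp (θ * ∑ j ∈ Finset.range (m+1),
        (-(r (Z j ω))) * Y j ω)) ∂(μ.restrict (E i)))
      = ENNReal.ofReal (w i * ∏ j : Fin (m+1), d (i j)) := by
    intro i
    have hgmeas : Measurable
        (fun y : Fin (m+1) → ℝ => ∏ j, ENNReal.ofReal (Real.exp (c i j * y j))) :=
      Finset.measurable_prod _ fun j _ =>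
        ((Real.measurable_exp.comp (measurable_const_mul _)).comp
          (measurable_pi_apply j)).ennreal_ofReal
    have hcongr : (∫⁻ ω, ENNReal.ofReal (Real.exp (θ * ∑ j ∈ Finset.range (m+1),
          (-(r (Z j ω))) * Y j ω)) ∂(μ.restrict (E i)))
        = ∫⁻ ω, (∏ j : Fin (m+1), ENNReal.ofReal (Real.exp (c i j * (YV ω j))))
            ∂(μ.restrict (E i)) := by
      apply setLIntegral_congr_fun (hEmeas i)
      intro ω hω
      have hsum : θ * ∑ j ∈ Finset.range (m+1), (-(r (Z j ω))) * Y j ω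
          = ∑ j : Fin (m+1), c i j * YV ω j := by
        rw [← Fin.sum_univ_eq_sum_range (fun j => (-(r (Z j ω))) * Y j ω) (m+1),
          Finset.mul_sum]
        refine Finset.sum_congr rfl fun j _ => ?_
        rw [hω j]
        simp only [hc, hYVdef]
        ring
      beta_reduce
      rw [hsum, Real.exp_sum,
        ENNReal.ofReal_prod_of_nonneg (fun j _ => (Real.exp_pos _).le)]
    rw [hcongr]
    have hmapint : (∫⁻ ω, (∏ j : Fin (m+1), ENNReal.ofReal (Real.exp (c i j * (YV ω j))))
          ∂(μ.restrict (E i)))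
        = ∫⁻ y, (∏ j : Fin (m+1), ENNReal.ofReal (Real.exp (c i j * y j)))
            ∂((μ.restrict (E i)).map YV) :=
      (lintegral_map hgmeas hYV).symm
    rw [hmapint, ← hmap i,
      lintegral_pi_prod_aux (m+1) (ν i) (hσ i)
        (fun j x => ENNReal.ofReal (Real.exp (c i j * x)))
        (fun j => (Real.measurable_exp.comp (measurable_const_mul _)).ennreal_ofReal)]
    rw [Fin.prod_univ_succ
      (fun j : Fin (m+1) => ∫⁻ x, ENNReal.ofReal (Real.exp (c i j * x)) ∂ν i j)]
    have h0 : (∫⁻ x, ENNReal.ofReal (Real.exp (c i 0 * x)) ∂ν i 0)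
        = ENNReal.ofReal (w i) * ENNReal.ofReal (d (i 0)) := by
      rw [hν]
      simp only [Fin.cons_zero]
      rw [hsmul i, lintegral_smul_measure, hexpint i 0, smul_eq_mul]
    have hsucc : ∀ j : Fin m, (∫⁻ x, ENNReal.ofReal (Real.exp (c i j.succ * x)) ∂ν i j.succ)
        = ENNReal.ofReal (d (i j.succ)) := by
      intro j
      rw [hν]
      simp only [Fin.cons_succ]
      exact hexpint i j.succ
    simp only [h0, hsucc]
    rw [ENNReal.ofReal_mul (hwnn i), ENNReal.ofReal_prod_of_nonneg (fun j _ => hdnn _),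
      Fin.prod_univ_succ (fun j : Fin (m+1) => ENNReal.ofReal (d (i j))), mul_assoc]
  -- decompose μ as a sum of restrictions to the path events
  have hμdec : μ = ∑ i : Fin (m+1) → Fin n, μ.restrict (E i) := by
    ext s hs
    rw [Measure.finset_sum_apply]
    simp only [Measure.restrict_apply hs]
    have hdisj : (↑(Finset.univ : Finset (Fin (m+1) → Fin n)) : Set (Fin (m+1) → Fin n)).PairwiseDisjoint
        (fun i => s ∩ E i) := by
      intro a _ b _ hab
      refine Set.disjoint_left.mpr fun ω hωa hωb => hab ?_
      funext j
      rw [← hωa.2 j, hωb.2 j]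
    rw [← measure_biUnion_finset hdisj (fun i _ => hs.inter (hEmeas i))]
    congr 1
    ext ω
    simp only [Set.mem_iUnion, Finset.mem_univ, Set.mem_inter_iff, Set.mem_setOf_eq, hE,
      exists_and_left, true_and]
    exact ⟨fun h => ⟨h, fun j => Z j ω, trivial, fun j => rfl⟩, fun h => h.1⟩
  have hFmeas : Measurable fun ω =>
      Real.exp (θ * ∑ j ∈ Finset.range (m+1), (-(r (Z j ω))) * Y j ω) :=
    Real.measurable_exp.comp ((Finset.measurable_sum _ fun j _ =>
      (((measurable_of_countable r).comp (hZ j)).neg.mul (hY j))).const_mul θ)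
  rw [integral_eq_lintegral_of_nonneg_ae
    (Filter.Eventually.of_forall fun ω => (Real.exp_pos _).le) hFmeas.aestronglyMeasurable]
  conv_lhs => rw [hμdec]
  rw [lintegral_finset_sum_measure]
  simp only [hpiece]
  rw [← ENNReal.ofReal_sum_of_nonneg
      (fun i _ => mul_nonneg (hwnn i) (Finset.prod_nonneg fun j _ => hdnn _)),
    ENNReal.toReal_ofReal (Finset.sum_nonneg
      fun i _ => mul_nonneg (hwnn i) (Finset.prod_nonneg fun j _ => hdnn _))]
  have halg := alg_path_sum n P hProw d M (fun l m' => hM l m') m π₀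
  simp only [hw]
  exact halg
end

section
/- Let M be an n×n real matrix with nonnegative entries, and let u, v ∈ ℝⁿ have strictly positive entries. Then lim_{k→∞} (uᵀ M^k v)^{1/k} exists and equals the spectral radius ρ(M) of M. -/
/-- The spectral radius of a real square matrix: the maximum modulus of its
complex eigenvalues. -/
noncomputable def Matrix.specRad {n : ℕ} (M : Matrix (Fin n) (Fin n) ℝ) : ℝ :=
  (spectralRadius ℂ (M.map (Complex.ofReal : ℝ → ℂ))).toReal

open scoped Matrix

/-- Explicit l∞ operator norm (max row sum of nnnorms) of a real matrix. -/
private noncomputable def mnrm {n : ℕ} (B : Matrix (Fin n) (Fin n) ℝ) : ℝ :=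
  (((Finset.univ : Finset (Fin n)).sup fun i => ∑ j, ‖B i j‖₊ : NNReal) : ℝ)

private lemma mnrm_nonneg {n : ℕ} (B : Matrix (Fin n) (Fin n) ℝ) : 0 ≤ mnrm B :=
  NNReal.coe_nonneg _

private lemma rowsum_le_mnrm {n : ℕ} (B : Matrix (Fin n) (Fin n) ℝ)
    (h : ∀ i j, 0 ≤ B i j) (i : Fin n) : ∑ j, B i j ≤ mnrm B := by
  have hle : (∑ j, ‖B i j‖₊) ≤ (Finset.univ : Finset (Fin n)).sup fun i => ∑ j, ‖B i j‖₊ :=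
    Finset.le_sup (f := fun i => ∑ j, ‖B i j‖₊) (Finset.mem_univ i)
  calc ∑ j, B i j = ((∑ j, ‖B i j‖₊ : NNReal) : ℝ) := by
        push_cast
        exact Finset.sum_congr rfl fun j _ => by
          simp [Real.norm_eq_abs, abs_of_nonneg (h i j)]
    _ ≤ mnrm B := by exact_mod_cast hle

private lemma mnrm_le_totalsum {n : ℕ} (B : Matrix (Fin n) (Fin n) ℝ)
    (h : ∀ i j, 0 ≤ B i j) : mnrm B ≤ ∑ i, ∑ j, B i j := by
  have hsup : ((Finset.univ : Finset (Fin n)).sup fun i => ∑ j, ‖B i j‖₊)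
      ≤ ∑ i, ∑ j, ‖B i j‖₊ :=
    Finset.sup_le fun i _ =>
      Finset.single_le_sum (f := fun i => ∑ j, ‖B i j‖₊) (fun i _ => zero_le)
        (Finset.mem_univ i)
  calc mnrm B ≤ ((∑ i, ∑ j, ‖B i j‖₊ : NNReal) : ℝ) := by exact_mod_cast hsup
    _ = ∑ i, ∑ j, B i j := by
        push_cast
        exact Finset.sum_congr rfl fun i _ => Finset.sum_congr rfl fun j _ => by
          simp [Real.norm_eq_abs, abs_of_nonneg (h i j)]

section Aux

attribute [local instance] Matrix.linftyOpNormedRing Matrix.linftyOpNormedAlgebra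
  Matrix.linfty_opNormOneClass

noncomputable local instance {n : ℕ} : CompleteSpace (Matrix (Fin n) (Fin n) ℂ) :=
  inferInstanceAs (CompleteSpace (Fin n → Fin n → ℂ))

private lemma mnrm_eq_norm {n : ℕ} (B : Matrix (Fin n) (Fin n) ℝ) :
    mnrm B = ‖B.map (Complex.ofReal : ℝ → ℂ)‖ := by
  rw [Matrix.linfty_opNorm_def, mnrm]
  congr 1
  refine congrArg _ (funext fun i => Finset.sum_congr rfl fun j _ => ?_)
  simp [Matrix.map_apply]

private lemma map_pow_eq {n : ℕ} (M : Matrix (Fin n) (Fin n) ℝ) (k : ℕ) :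
    (M.map (Complex.ofReal : ℝ → ℂ)) ^ k = (M ^ k).map (Complex.ofReal : ℝ → ℂ) := by
  have := map_pow ((Complex.ofRealHom : ℝ →+* ℂ).mapMatrix) M k
  exact this.symm

/-- Gelfand's formula, real form, for the complexification of a real matrix. -/
private lemma gelfand_real {n : ℕ} (hn : 1 ≤ n) (M : Matrix (Fin n) (Fin n) ℝ) :
    Filter.Tendsto (fun k : ℕ => mnrm (M ^ k) ^ ((1 : ℝ) / k))
      Filter.atTop (nhds M.specRad) := by
  haveI : Nonempty (Fin n) := ⟨⟨0, hn⟩⟩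
  set A := M.map (Complex.ofReal : ℝ → ℂ)
  have hne : spectralRadius ℂ A ≠ ⊤ :=
    ((spectrum.spectralRadius_le_nnnorm A).trans_lt ENNReal.coe_lt_top).ne
  have h := (ENNReal.tendsto_toReal hne).comp
    (spectrum.pow_nnnorm_pow_one_div_tendsto_nhds_spectralRadius A)
  have heq : ∀ k : ℕ, (((‖A ^ k‖₊ : ENNReal) ^ ((1:ℝ) / k)).toReal)
      = mnrm (M ^ k) ^ ((1:ℝ) / k) := by
    intro k
    rw [← ENNReal.toReal_rpow, mnrm_eq_norm, ← map_pow_eq]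
    simp
    rfl
  simpa only [Function.comp_def, heq, Matrix.specRad] using h

end Aux

private lemma pow_entry_nonneg {n : ℕ} (M : Matrix (Fin n) (Fin n) ℝ)
    (h : ∀ i j, 0 ≤ M i j) (k : ℕ) : ∀ i j, 0 ≤ (M ^ k) i j := by
  induction k with
  | zero => intro i j; simp only [pow_zero, Matrix.one_apply]; split <;> norm_num
  | succ k ih =>
      intro i j
      rw [pow_succ, Matrix.mul_apply]
      exact Finset.sum_nonneg fun l _ => mul_nonneg (ih i l) (h l j)

/-- Perron–Frobenius-type asymptotics (Dembo–Zeitouni, Theorem 3.1.1): for a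
nonnegative matrix `M` and strictly positive vectors `u`, `v`, the `k`-th root
of the bilinear form `uᵀ M^k v` converges to the spectral radius of `M`. -/
theorem bilinear_form_growth_spectral_radius
    (n : ℕ) (hn : 1 ≤ n) (M : Matrix (Fin n) (Fin n) ℝ)
    (hMnn : ∀ i j, 0 ≤ M i j)
    (u v : Fin n → ℝ) (hu : ∀ i, 0 < u i) (hv : ∀ i, 0 < v i) :
    Filter.Tendsto (fun k : ℕ => (u ⬝ᵥ ((M ^ k) *ᵥ v)) ^ ((1 : ℝ) / k))
      Filter.atTop (nhds M.specRad) := by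
  haveI : Nonempty (Fin n) := ⟨⟨0, hn⟩⟩
  -- extremal values of u and v
  obtain ⟨i₀, -, ha⟩ := Finset.exists_min_image Finset.univ u ⟨⟨0,hn⟩, Finset.mem_univ _⟩
  obtain ⟨j₀, -, hb⟩ := Finset.exists_min_image Finset.univ v ⟨⟨0,hn⟩, Finset.mem_univ _⟩
  obtain ⟨i₁, -, hA'⟩ := Finset.exists_max_image Finset.univ u ⟨⟨0,hn⟩, Finset.mem_univ _⟩
  obtain ⟨j₁, -, hB'⟩ := Finset.exists_max_image Finset.univ v ⟨⟨0,hn⟩, Finset.mem_univ _⟩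
  set a : ℝ := u i₀ with ha_def
  set b : ℝ := v j₀ with hb_def
  set c : ℝ := a * b with hc_def
  set C : ℝ := u i₁ * v j₁ * n with hC_def
  have hapos : 0 < a := hu i₀
  have hbpos : 0 < b := hv j₀
  have hcpos : 0 < c := mul_pos hapos hbpos
  have hCpos : 0 < C := by
    have hn' : (0:ℝ) < n := by exact_mod_cast hn
    exact mul_pos (mul_pos (hu i₁) (hv j₁)) hn'
  -- the bilinear form, sandwiched
  have key : ∀ k : ℕ, c * mnrm (M ^ k) ≤ u ⬝ᵥ ((M ^ k) *ᵥ v) ∧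
      u ⬝ᵥ ((M ^ k) *ᵥ v) ≤ C * mnrm (M ^ k) := by
    intro k
    have hP := pow_entry_nonneg M hMnn k
    have hform : u ⬝ᵥ ((M ^ k) *ᵥ v) = ∑ i, ∑ j, u i * ((M ^ k) i j * v j) := by
      simp [dotProduct, Matrix.mulVec, Finset.mul_sum]
    constructor
    · -- lower bound
      have h1 : c * mnrm (M ^ k) ≤ c * ∑ i, ∑ j, (M ^ k) i j :=
        mul_le_mul_of_nonneg_left (mnrm_le_totalsum _ hP) hcpos.le
      have h2 : c * ∑ i, ∑ j, (M ^ k) i j ≤ u ⬝ᵥ ((M ^ k) *ᵥ v) := by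
        rw [hform, Finset.mul_sum]
        refine Finset.sum_le_sum fun i _ => ?_
        rw [Finset.mul_sum]
        refine Finset.sum_le_sum fun j _ => ?_
        have h3 : a * (b * (M ^ k) i j) ≤ u i * (v j * (M ^ k) i j) :=
          mul_le_mul (ha i (Finset.mem_univ i)) (mul_le_mul_of_nonneg_right
            (hb j (Finset.mem_univ j)) (hP i j)) (mul_nonneg hbpos.le (hP i j)) (hu i).le
        calc c * (M ^ k) i j = a * (b * (M ^ k) i j) := by rw [hc_def]; ring
          _ ≤ u i * (v j * (M ^ k) i j) := h3
          _ = u i * ((M ^ k) i j * v j) := by ring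
      linarith
    · -- upper bound
      have h2 : u ⬝ᵥ ((M ^ k) *ᵥ v) ≤ (u i₁ * v j₁) * ∑ i, ∑ j, (M ^ k) i j := by
        rw [hform, Finset.mul_sum]
        refine Finset.sum_le_sum fun i _ => ?_
        rw [Finset.mul_sum]
        refine Finset.sum_le_sum fun j _ => ?_
        have h3 : u i * (v j * (M ^ k) i j) ≤ u i₁ * (v j₁ * (M ^ k) i j) :=
          mul_le_mul (hA' i (Finset.mem_univ i)) (mul_le_mul_of_nonneg_right
            (hB' j (Finset.mem_univ j)) (hP i j)) (mul_nonneg (hv j).le (hP i j)) (hu i₁).le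
        calc u i * ((M ^ k) i j * v j) = u i * (v j * (M ^ k) i j) := by ring
          _ ≤ u i₁ * (v j₁ * (M ^ k) i j) := h3
          _ = u i₁ * v j₁ * (M ^ k) i j := by ring
      have h1 : (u i₁ * v j₁) * ∑ i, ∑ j, (M ^ k) i j ≤ C * mnrm (M ^ k) := by
        have hsum : ∑ i, ∑ j, (M ^ k) i j ≤ n * mnrm (M ^ k) := by
          calc ∑ i, ∑ j, (M ^ k) i j
              ≤ ∑ _i : Fin n, mnrm (M ^ k) :=
                Finset.sum_le_sum fun i _ => rowsum_le_mnrm _ hP i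
            _ = n * mnrm (M ^ k) := by simp [Finset.sum_const, nsmul_eq_mul]
        calc (u i₁ * v j₁) * ∑ i, ∑ j, (M ^ k) i j
            ≤ (u i₁ * v j₁) * (n * mnrm (M ^ k)) :=
              mul_le_mul_of_nonneg_left hsum (mul_pos (hu i₁) (hv j₁)).le
          _ = C * mnrm (M ^ k) := by rw [hC_def]; ring
      linarith
  have hnorm_nonneg : ∀ k : ℕ, (0:ℝ) ≤ mnrm (M ^ k) := fun k => mnrm_nonneg _
  have hf_nonneg : ∀ k : ℕ, (0:ℝ) ≤ u ⬝ᵥ ((M ^ k) *ᵥ v) := fun k =>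
    le_trans (mul_nonneg hcpos.le (hnorm_nonneg k)) (key k).1
  -- Gelfand's formula
  have hG := gelfand_real hn M
  -- limits of the constant-power factors
  have hexp : Filter.Tendsto (fun k : ℕ => (1:ℝ) / k) Filter.atTop (nhds 0) :=
    tendsto_one_div_atTop_nhds_zero_nat
  have hc1 : Filter.Tendsto (fun k : ℕ => c ^ ((1:ℝ) / k)) Filter.atTop (nhds 1) := by
    have := (Filter.Tendsto.rpow (tendsto_const_nhds (x := c)) hexp (Or.inl hcpos.ne'))
    simpa using this
  have hC1 : Filter.Tendsto (fun k : ℕ => C ^ ((1:ℝ) / k)) Filter.atTop (nhds 1) := by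
    have := (Filter.Tendsto.rpow (tendsto_const_nhds (x := C)) hexp (Or.inl hCpos.ne'))
    simpa using this
  -- lower and upper sandwiching sequences
  have hlow : Filter.Tendsto (fun k : ℕ => c ^ ((1:ℝ) / k) * mnrm (M ^ k) ^ ((1:ℝ) / k))
      Filter.atTop (nhds M.specRad) := by
    have := hc1.mul hG
    simpa using this
  have hupp : Filter.Tendsto (fun k : ℕ => C ^ ((1:ℝ) / k) * mnrm (M ^ k) ^ ((1:ℝ) / k))
      Filter.atTop (nhds M.specRad) := by
    have := hC1.mul hG
    simpa using this
  refine tendsto_of_tendsto_of_tendsto_of_le_of_le hlow hupp (fun k => ?_) (fun k => ?_)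
  · have hk : (0:ℝ) ≤ (1:ℝ) / k := by positivity
    rw [← Real.mul_rpow hcpos.le (hnorm_nonneg k)]
    exact Real.rpow_le_rpow (mul_nonneg hcpos.le (hnorm_nonneg k)) (key k).1 hk
  · have hk : (0:ℝ) ≤ (1:ℝ) / k := by positivity
    rw [← Real.mul_rpow hCpos.le (hnorm_nonneg k)]
    exact Real.rpow_le_rpow (hf_nonneg k) (key k).2 hk
end

section
/- Let M be an n×n real matrix with nonnegative entries, and define the symmetric nonnegative matrix G by G_{ij} = √(M_{ij}·M_{ji}) for all i, j. Then the spectral radius of G is at most the spectral radius of M: ρ(G) ≤ ρ(M). -/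
open Filter Finset ENNReal
open scoped NNReal Topology

attribute [local instance] Matrix.linftyOpNormedRing Matrix.linftyOpNormedAlgebra

/-- Entries of powers of an entrywise-nonnegative matrix are nonnegative. -/
lemma specRadAux_pow_nonneg {n : ℕ} {M : Matrix (Fin n) (Fin n) ℝ}
    (hM : ∀ i j, 0 ≤ M i j) (k : ℕ) : ∀ i j, 0 ≤ (M ^ k) i j := by
  induction k with
  | zero =>
    intro i j
    rw [pow_zero]
    by_cases h : i = j <;> simp [Matrix.one_apply, h]
  | succ k ih =>
    intro i j
    rw [pow_succ, Matrix.mul_apply]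
    exact Finset.sum_nonneg fun l _ => mul_nonneg (ih i l) (hM l j)

/-- Entrywise Schwenk bound for powers: `(G^k)_{ij} ≤ √((M^k)_{ij} (M^k)_{ji})`. -/
lemma specRadAux_pow_le {n : ℕ} {M G : Matrix (Fin n) (Fin n) ℝ}
    (hM : ∀ i j, 0 ≤ M i j)
    (hG : ∀ i j, G i j = Real.sqrt (M i j * M j i)) (k : ℕ) :
    ∀ i j, (G ^ k) i j ≤ Real.sqrt ((M ^ k) i j * (M ^ k) j i) := by
  have hGnn : ∀ i j, 0 ≤ G i j := fun i j => (hG i j) ▸ Real.sqrt_nonneg _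
  induction k with
  | zero =>
    intro i j
    rw [pow_zero]
    by_cases h : i = j <;> simp [Matrix.one_apply, h]
  | succ k ih =>
    intro i j
    rw [pow_succ, Matrix.mul_apply]
    have key : ∀ l, (G ^ k) i l * G l j ≤
        Real.sqrt ((M ^ k) i l * M l j) * Real.sqrt (M j l * (M ^ k) l i) := by
      intro l
      have h1 : (G ^ k) i l * G l j ≤
          Real.sqrt ((M ^ k) i l * (M ^ k) l i) * Real.sqrt (M l j * M j l) :=
        mul_le_mul (ih i l) (le_of_eq (hG l j)) (hGnn l j) (Real.sqrt_nonneg _)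
      refine h1.trans (le_of_eq ?_)
      rw [← Real.sqrt_mul (mul_nonneg (specRadAux_pow_nonneg hM k i l)
            (specRadAux_pow_nonneg hM k l i)),
        ← Real.sqrt_mul (mul_nonneg (specRadAux_pow_nonneg hM k i l) (hM l j))]
      ring_nf
    calc ∑ l, (G ^ k) i l * G l j
        ≤ ∑ l, Real.sqrt ((M ^ k) i l * M l j) * Real.sqrt (M j l * (M ^ k) l i) :=
          Finset.sum_le_sum fun l _ => key l
      _ ≤ Real.sqrt (∑ l, (M ^ k) i l * M l j) * Real.sqrt (∑ l, M j l * (M ^ k) l i) :=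
          Real.sum_sqrt_mul_sqrt_le _
            (fun l => mul_nonneg (specRadAux_pow_nonneg hM k i l) (hM l j))
            (fun l => mul_nonneg (hM j l) (specRadAux_pow_nonneg hM k l i))
      _ = Real.sqrt ((M ^ (k + 1)) i j * (M ^ (k + 1)) j i) := by
          have e1 : (M ^ (k + 1)) i j = ∑ l, (M ^ k) i l * M l j := by
            rw [pow_succ, Matrix.mul_apply]
          have e2 : (M ^ (k + 1)) j i = ∑ l, M j l * (M ^ k) l i := by
            rw [pow_succ', Matrix.mul_apply]
          rw [e1, e2, ← Real.sqrt_mul (Finset.sum_nonneg fun l _ =>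
            mul_nonneg (specRadAux_pow_nonneg hM k i l) (hM l j))]

/-- AM–GM: `√(a b) ≤ (a + b) / 2` for nonnegative reals. -/
lemma specRadAux_sqrt_le_half_add {a b : ℝ} (ha : 0 ≤ a) (hb : 0 ≤ b) :
    Real.sqrt (a * b) ≤ (a + b) / 2 := by
  calc Real.sqrt (a * b) ≤ Real.sqrt (((a + b) / 2) ^ 2) :=
        Real.sqrt_le_sqrt (by nlinarith [sq_nonneg (a - b)])
    _ = (a + b) / 2 := Real.sqrt_sq (by positivity)

/-- The `L∞`-operator norm of `(G^k)` is at most `(n+1)` times that of `(M^k)`. -/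
lemma specRadAux_norm_le {n : ℕ} {M G : Matrix (Fin n) (Fin n) ℝ}
    (hM : ∀ i j, 0 ≤ M i j)
    (hG : ∀ i j, G i j = Real.sqrt (M i j * M j i)) (k : ℕ) :
    ‖(G.map (Complex.ofReal : ℝ → ℂ)) ^ k‖₊ ≤
      ((n : ℝ≥0) + 1) * ‖(M.map (Complex.ofReal : ℝ → ℂ)) ^ k‖₊ := by
  classical
  have hGnn : ∀ i j, 0 ≤ G i j := fun i j => (hG i j) ▸ Real.sqrt_nonneg _
  have hmap : ∀ (A : Matrix (Fin n) (Fin n) ℝ),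
      (A.map (Complex.ofReal : ℝ → ℂ)) ^ k = (A ^ k).map Complex.ofReal := fun A => by
    exact
      (map_pow (RingHom.mapMatrix (m := Fin n) Complex.ofRealHom) A k).symm
  rw [hmap M, hmap G]
  set a : ℝ := ((‖((M ^ k).map (Complex.ofReal : ℝ → ℂ))‖₊ : ℝ≥0) : ℝ) with ha_def
  have ha : 0 ≤ a := NNReal.coe_nonneg _
  -- row sums of |M^k| are bounded by a
  have hrow : ∀ i : Fin n, ∑ j, (M ^ k) i j ≤ a := by
    intro i
    have h := Finset.le_sup (f := fun i : Fin n =>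
      ∑ j, ‖((M ^ k).map (Complex.ofReal : ℝ → ℂ)) i j‖₊) (Finset.mem_univ i)
    rw [← Matrix.linfty_opNNNorm_def] at h
    have h' := NNReal.coe_le_coe.mpr h
    rw [NNReal.coe_sum] at h'
    refine le_trans (le_of_eq ?_) h'
    refine Finset.sum_congr rfl fun j _ => ?_
    simp [Matrix.map_apply, Complex.norm_real, Real.norm_eq_abs,
      abs_of_nonneg (specRadAux_pow_nonneg hM k i j)]
  -- individual entries of M^k are bounded by a
  have hent : ∀ i j : Fin n, (M ^ k) i j ≤ a := by
    intro i j
    refine le_trans ?_ (hrow i)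
    exact Finset.single_le_sum (fun l _ => specRadAux_pow_nonneg hM k i l) (Finset.mem_univ j)
  rw [Matrix.linfty_opNNNorm_def]
  refine Finset.sup_le fun i _ => ?_
  rw [← NNReal.coe_le_coe, NNReal.coe_sum, NNReal.coe_mul]
  push_cast
  calc ∑ j, ‖((G ^ k).map (Complex.ofReal : ℝ → ℂ)) i j‖
      = ∑ j, (G ^ k) i j := by
        refine Finset.sum_congr rfl fun j _ => ?_
        simp [Matrix.map_apply, Complex.norm_real, Real.norm_eq_abs,
          abs_of_nonneg (specRadAux_pow_nonneg hGnn k i j)]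
    _ ≤ ∑ j, ((M ^ k) i j + (M ^ k) j i) / 2 := by
        refine Finset.sum_le_sum fun j _ => ?_
        exact (specRadAux_pow_le hM hG k i j).trans
          (specRadAux_sqrt_le_half_add (specRadAux_pow_nonneg hM k i j)
            (specRadAux_pow_nonneg hM k j i))
    _ = ((∑ j, (M ^ k) i j) + ∑ j, (M ^ k) j i) / 2 := by
        rw [← Finset.sum_add_distrib, Finset.sum_div]
    _ ≤ (a + (n : ℝ) * a) / 2 := by
        have h1 : ∑ j, (M ^ k) j i ≤ (n : ℝ) * a := by
          calc ∑ j, (M ^ k) j i ≤ ∑ _j : Fin n, a :=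
                Finset.sum_le_sum fun j _ => hent j i
            _ = (n : ℝ) * a := by simp [Finset.sum_const, nsmul_eq_mul]
        have h2 := hrow i
        linarith
    _ ≤ ((n : ℝ) + 1) * a := by nlinarith

/-- Schwenk's inequality: for a nonnegative matrix `M`, the symmetric matrix
`G` of entrywise geometric means `G_{ij} = √(M_{ij} M_{ji})` has spectral
radius at most that of `M`. -/
theorem specRad_geometric_mean_le
    (n : ℕ) (M G : Matrix (Fin n) (Fin n) ℝ)
    (hMnn : ∀ i j, 0 ≤ M i j)
    (hG : ∀ i j, G i j = Real.sqrt (M i j * M j i)) :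
    G.specRad ≤ M.specRad := by
  classical
  rcases Nat.eq_zero_or_pos n with hn | hn
  · -- trivial case: `Fin 0` matrices form a trivial algebra with empty spectra
    subst hn
    haveI : Subsingleton (Matrix (Fin 0) (Fin 0) ℂ) :=
      ⟨fun a b => by ext i; exact i.elim0⟩
    have hspec : ∀ A : Matrix (Fin 0) (Fin 0) ℂ, spectrum ℂ A = ∅ := by
      intro A
      ext z
      simp [spectrum.mem_iff, isUnit_of_subsingleton]
    unfold Matrix.specRad spectralRadius
    simp [hspec]
  · haveI : Nonempty (Fin n) := ⟨⟨0, hn⟩⟩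
    set Mc := M.map (Complex.ofReal : ℝ → ℂ) with hMc
    set Gc := G.map (Complex.ofReal : ℝ → ℂ) with hGc
    set c : ℝ≥0 := (n : ℝ≥0) + 1 with hc_def
    have hc0 : c ≠ 0 := by positivity
    -- Gelfand's formula for both matrices
    have hgG := spectrum.pow_nnnorm_pow_one_div_tendsto_nhds_spectralRadius Gc
    have hgM := spectrum.pow_nnnorm_pow_one_div_tendsto_nhds_spectralRadius Mc
    -- pointwise inequality between the sequences
    have hineq : ∀ k : ℕ, (‖Gc ^ k‖₊ : ℝ≥0∞) ^ (1 / (k : ℝ)) ≤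
        ((c : ℝ≥0∞) ^ (1 / (k : ℝ))) * (‖Mc ^ k‖₊ : ℝ≥0∞) ^ (1 / (k : ℝ)) := by
      intro k
      have h := specRadAux_norm_le hMnn hG k
      have h' : (‖Gc ^ k‖₊ : ℝ≥0∞) ≤ (c : ℝ≥0∞) * (‖Mc ^ k‖₊ : ℝ≥0∞) := by
        rw [hGc, hMc, hc_def, ← ENNReal.coe_mul]
        exact_mod_cast h
      calc (‖Gc ^ k‖₊ : ℝ≥0∞) ^ (1 / (k : ℝ))
          ≤ ((c : ℝ≥0∞) * (‖Mc ^ k‖₊ : ℝ≥0∞)) ^ (1 / (k : ℝ)) :=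
            ENNReal.rpow_le_rpow h' (by positivity)
        _ = ((c : ℝ≥0∞) ^ (1 / (k : ℝ))) * (‖Mc ^ k‖₊ : ℝ≥0∞) ^ (1 / (k : ℝ)) :=
            ENNReal.mul_rpow_of_nonneg _ _ (by positivity)
    -- `c ^ (1/k) → 1`
    have hc : Tendsto (fun k : ℕ => (c : ℝ≥0∞) ^ (1 / (k : ℝ))) atTop (𝓝 1) := by
      have hreal : Tendsto (fun k : ℕ => (c : ℝ) ^ (1 / (k : ℝ))) atTop (𝓝 1) := by
        have h0 : Tendsto (fun k : ℕ => (1 / (k : ℝ))) atTop (𝓝 0) :=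
          tendsto_one_div_atTop_nhds_zero_nat
        have := (Real.continuousAt_const_rpow (a := (c : ℝ)) (by exact_mod_cast hc0)).tendsto.comp h0
        simpa [Real.rpow_zero, Function.comp_def] using this
      have hnn : Tendsto (fun k : ℕ => c ^ (1 / (k : ℝ))) atTop (𝓝 (1 : ℝ≥0)) := by
        rw [← NNReal.tendsto_coe]
        simpa [NNReal.coe_rpow] using hreal
      have := ENNReal.tendsto_coe.mpr hnn
      simpa [ENNReal.coe_rpow_of_ne_zero hc0] using this
    have hmul : Tendsto (fun k : ℕ => ((c : ℝ≥0∞) ^ (1 / (k : ℝ))) *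
        (‖Mc ^ k‖₊ : ℝ≥0∞) ^ (1 / (k : ℝ))) atTop (𝓝 (1 * spectralRadius ℂ Mc)) :=
      ENNReal.Tendsto.mul hc (Or.inl one_ne_zero) hgM (Or.inr ENNReal.one_ne_top)
    have hle : spectralRadius ℂ Gc ≤ 1 * spectralRadius ℂ Mc :=
      le_of_tendsto_of_tendsto' hgG hmul hineq
    rw [one_mul] at hle
    have hMtop : spectralRadius ℂ Mc ≠ ⊤ :=
      ne_top_of_le_ne_top ENNReal.coe_ne_top (spectrum.spectralRadius_le_nnnorm (𝕜 := ℂ) Mc)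
    exact ENNReal.toReal_mono hMtop hle
end

section
/- Fix n ≥ 1, a row-stochastic matrix P ∈ ℝ^{n×n} with strictly positive diagonal entries (P_{ll} > 0 for all l), rates r : {1,…,n} → ℝ with r̲ := min_l r(l) < 0 < max_l r(l) =: r̄, and q > 0. For θ in the open interval I = (-q/r̄, -q/r̲) (on which q + θ r(l) > 0 for all l), define M(θ) by M(θ)_{l,m} = P_{l,m}·q/(q + θ r(l)). Then ρ(M(θ)) → ∞ as θ ↑ -q/r̲ and ρ(M(θ)) → ∞ as θ ↓ -q/r̄. -/
open Polynomial Matrix Filter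
open scoped ENNReal NNReal Topology

lemma root_mem_spectrum {N : ℕ} (B : Matrix (Fin N) (Fin N) ℂ) {μ : ℂ}
    (hμ : μ ∈ B.charpoly.roots) : μ ∈ spectrum ℂ B := by
  have h0 : B.charpoly.eval μ = 0 := (Polynomial.isRoot_of_mem_roots hμ)
  have hdet : B.charpoly.eval μ = (Matrix.scalar (Fin N) μ - B).det := by
    rw [Matrix.charpoly, _root_.eval_det, Matrix.matPolyEquiv_charmatrix]
    simp
  have halg : algebraMap ℂ (Matrix (Fin N) (Fin N) ℂ) μ = Matrix.scalar (Fin N) μ := by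
    ext i j
    simp [Matrix.algebraMap_matrix_apply, Matrix.scalar_apply, Matrix.diagonal]
  rw [spectrum.mem_iff]
  intro hU
  rw [Matrix.isUnit_iff_isUnit_det] at hU
  rw [halg, ← hdet, h0] at hU
  simp at hU

lemma norm_le_specRad {N : ℕ} (A : Matrix (Fin N) (Fin N) ℝ) {μ : ℂ}
    (hμ : μ ∈ spectrum ℂ (A.map (Complex.ofReal : ℝ → ℂ))) : ‖μ‖ ≤ A.specRad := by
  set B := A.map (Complex.ofReal : ℝ → ℂ) with hB
  have hfin : (spectrum ℂ B).Finite := B.finite_spectrum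
  have hne : spectralRadius ℂ B ≠ ⊤ := by
    have hle : spectralRadius ℂ B ≤ hfin.toFinset.sup (fun k => (‖k‖₊ : ℝ≥0∞)) := by
      apply iSup₂_le; intro k hk
      exact Finset.le_sup (f := fun (k : ℂ) => (‖k‖₊ : ℝ≥0∞)) (hfin.mem_toFinset.mpr hk)
    have hfs : hfin.toFinset.sup (fun k => (‖k‖₊ : ℝ≥0∞)) < ⊤ :=
      (Finset.sup_lt_iff (by simp : (⊥ : ℝ≥0∞) < ⊤)).mpr fun k _ => ENNReal.coe_lt_top
    exact ne_top_of_le_ne_top hfs.ne hle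
  have hle : (‖μ‖₊ : ℝ≥0∞) ≤ spectralRadius ℂ B :=
    le_iSup₂ (f := fun (k : ℂ) (_ : k ∈ spectrum ℂ B) => (‖k‖₊ : ℝ≥0∞)) μ hμ
  have h := ENNReal.toReal_mono hne hle
  simpa [Matrix.specRad] using h

lemma trace_le_mul_specRad {N : ℕ} (hN : 0 < N) (A : Matrix (Fin N) (Fin N) ℝ) :
    |A.trace| ≤ (N : ℝ) * A.specRad := by
  set B := A.map (Complex.ofReal : ℝ → ℂ) with hB
  have htr : B.trace = (B.charpoly.roots).sum := Matrix.trace_eq_sum_roots_charpoly B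
  have hcard : Multiset.card B.charpoly.roots = N := by
    have h1 := Polynomial.splits_iff_card_roots.mp (IsAlgClosed.splits (k := ℂ) B.charpoly)
    rw [h1, Matrix.charpoly_natDegree_eq_dim, Fintype.card_fin]
  have hnonempty : B.charpoly.roots.toFinset.Nonempty := by
    rw [Multiset.toFinset_nonempty, ← Multiset.card_pos, hcard]
    exact hN
  obtain ⟨μ, hμmem, hμmax⟩ := Finset.exists_max_image B.charpoly.roots.toFinset (fun z => ‖z‖) hnonempty
  have hμroot : μ ∈ B.charpoly.roots := Multiset.mem_toFinset.mp hμmem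
  have h1 : ‖B.trace‖ ≤ (B.charpoly.roots.map (fun z => ‖z‖)).sum := by
    rw [htr]; exact norm_multiset_sum_le _
  have h2 : (B.charpoly.roots.map (fun z => ‖z‖)).sum ≤
      (Multiset.card (B.charpoly.roots.map (fun z => ‖z‖))) • ‖μ‖ := by
    apply Multiset.sum_le_card_nsmul
    intro x hx
    obtain ⟨z, hz, rfl⟩ := Multiset.mem_map.mp hx
    exact hμmax z (Multiset.mem_toFinset.mpr hz)
  rw [Multiset.card_map, hcard, nsmul_eq_mul] at h2
  have htrA : B.trace = (A.trace : ℂ) := by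
    simp [Matrix.trace, hB, Matrix.map_apply, Matrix.diag]
  have hnorm : ‖B.trace‖ = |A.trace| := by rw [htrA, Complex.norm_real, Real.norm_eq_abs]
  calc |A.trace| ≤ (N : ℝ) * ‖μ‖ := by rw [← hnorm]; exact h1.trans h2
    _ ≤ (N : ℝ) * A.specRad := by
        apply mul_le_mul_of_nonneg_left _ (by positivity)
        exact norm_le_specRad A (root_mem_spectrum B hμroot)

/-- Steepness: for a row-stochastic `P` with positive diagonal and rates with
`r̲ < 0 < r̄`, the spectral radius of the tilted matrix
`M(θ)_{l,m} = P_{l,m} q/(q + θ r(l))` blows up at both endpoints of the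
effective domain `(-q/r̄, -q/r̲)`. -/
theorem specRad_blowup_at_boundary
    (n : ℕ) (hn : 1 ≤ n)
    (P : Matrix (Fin n) (Fin n) ℝ)
    (hPnn : ∀ l m, 0 ≤ P l m) (hProw : ∀ l, ∑ m, P l m = 1)
    (hPdiag : ∀ l, 0 < P l l)
    (r : Fin n → ℝ) (q : ℝ) (hq : 0 < q)
    (rlo rhi : ℝ) (hlo : ∀ l, rlo ≤ r l) (hlo_mem : ∃ l, r l = rlo)
    (hhi : ∀ l, r l ≤ rhi) (hhi_mem : ∃ l, r l = rhi)
    (hrlo : rlo < 0) (hrhi : 0 < rhi)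
    (M : ℝ → Matrix (Fin n) (Fin n) ℝ)
    (hM : ∀ θ l m, M θ l m = P l m * (q / (q + θ * r l))) :
    Filter.Tendsto (fun θ => (M θ).specRad)
        (nhdsWithin (-q / rlo) (Set.Ioo (-q / rhi) (-q / rlo)))
        Filter.atTop ∧
      Filter.Tendsto (fun θ => (M θ).specRad)
        (nhdsWithin (-q / rhi) (Set.Ioo (-q / rhi) (-q / rlo)))
        Filter.atTop := by
  have hn' : (0 : ℝ) < n := by exact_mod_cast hn
  set I : Set ℝ := Set.Ioo (-q / rhi) (-q / rlo) with hI
  -- positivity of q + θ * r l on I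
  have hpos : ∀ θ ∈ I, ∀ l, 0 < q + θ * r l := by
    intro θ hθ l
    rcases le_or_gt 0 θ with h0 | h0
    · have h1 : θ * rlo ≤ θ * r l := mul_le_mul_of_nonneg_left (hlo l) h0
      have h2 : -q < θ * rlo := by
        have := mul_lt_mul_of_neg_right hθ.2 hrlo
        rwa [div_mul_cancel₀ (-q) (ne_of_lt hrlo)] at this
      linarith
    · have h1 : θ * rhi ≤ θ * r l := by
        have := mul_le_mul_of_nonpos_left (hhi l) h0.le
        linarith [this]
      have h2 : -q < θ * rhi := by
        have := mul_lt_mul_of_pos_right hθ.1 hrhi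
        rwa [div_mul_cancel₀ (-q) (ne_of_gt hrhi)] at this
      linarith
  -- lower bound for the spectral radius via the trace
  have hspec : ∀ θ ∈ I, ∀ l₀, P l₀ l₀ * (q / (q + θ * r l₀)) / n ≤ (M θ).specRad := by
    intro θ hθ l₀
    have htr : (M θ).trace = ∑ l, P l l * (q / (q + θ * r l)) := by
      simp [Matrix.trace, Matrix.diag, hM]
    have hterm : ∀ l, 0 ≤ P l l * (q / (q + θ * r l)) := by
      intro l
      exact mul_nonneg (hPdiag l).le (div_nonneg hq.le (hpos θ hθ l).le)
    have h3 : P l₀ l₀ * (q / (q + θ * r l₀)) ≤ (M θ).trace := by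
      rw [htr]
      exact Finset.single_le_sum (fun l _ => hterm l) (Finset.mem_univ l₀)
    have h0 : 0 ≤ (M θ).trace := by
      rw [htr]; exact Finset.sum_nonneg fun l _ => hterm l
    have h2 := trace_le_mul_specRad (by omega : 0 < n) (M θ)
    rw [abs_of_nonneg h0] at h2
    rw [div_le_iff₀ hn']
    calc P l₀ l₀ * (q / (q + θ * r l₀)) ≤ (M θ).trace := h3
      _ ≤ (n : ℝ) * (M θ).specRad := h2
      _ = (M θ).specRad * n := by ring
  -- generic blow-up argument
  have key : ∀ (l₀ : Fin n) (θ₀ : ℝ), q + θ₀ * r l₀ = 0 →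
      Tendsto (fun θ => (M θ).specRad) (nhdsWithin θ₀ I) atTop := by
    intro l₀ θ₀ hθ₀
    have hx : Tendsto (fun θ => q + θ * r l₀) (nhdsWithin θ₀ I) (nhdsWithin 0 (Set.Ioi 0)) := by
      rw [tendsto_nhdsWithin_iff]
      constructor
      · have hc : Tendsto (fun θ => q + θ * r l₀) (𝓝 θ₀) (𝓝 (q + θ₀ * r l₀)) := by
          exact (continuous_const.add (continuous_id.mul continuous_const)).tendsto θ₀
        rw [hθ₀] at hc
        exact hc.mono_left nhdsWithin_le_nhds
      · filter_upwards [self_mem_nhdsWithin] with θ hθ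
        exact hpos θ hθ l₀
    have hinv : Tendsto (fun θ => (q + θ * r l₀)⁻¹) (nhdsWithin θ₀ I) atTop :=
      tendsto_inv_nhdsGT_zero.comp hx
    have hconst : (0 : ℝ) < P l₀ l₀ * q / n := div_pos (mul_pos (hPdiag l₀) hq) hn'
    have hg : Tendsto (fun θ => (P l₀ l₀ * q / n) * (q + θ * r l₀)⁻¹) (nhdsWithin θ₀ I) atTop :=
      hinv.const_mul_atTop hconst
    apply tendsto_atTop_mono' _ _ hg
    filter_upwards [self_mem_nhdsWithin] with θ hθ
    have heq : (P l₀ l₀ * q / n) * (q + θ * r l₀)⁻¹ = P l₀ l₀ * (q / (q + θ * r l₀)) / n := by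
      field_simp
    rw [heq]
    exact hspec θ hθ l₀
  obtain ⟨l₀, hl₀⟩ := hlo_mem
  obtain ⟨l₁, hl₁⟩ := hhi_mem
  constructor
  · apply key l₀
    rw [hl₀, div_mul_cancel₀ (-q) (ne_of_lt hrlo)]
    ring
  · apply key l₁
    rw [hl₁, div_mul_cancel₀ (-q) (ne_of_gt hrhi)]
    ring
end
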